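/- Let θ* ∈ ℝ^K be the vector with components θ*_k = ln(μ_k/ν_k) = −ln ρ_k. Then H_0(θ*) = 0. -/

import Mathlib

open Matrix

/-- Theorem 2.1 (the:H), first claim: with `θ*_k = ln(μ_k/ν_k)`, one has `H₀(θ*) = 0`,
where `H₀(θ) = Σ_k (e^{θ_k} − 1) λ_k + Σ_k h_k(θ) μ_k` and
`h_k(θ) = e^{−θ_k}(Σ_l (e^{θ_l} − 1) p_{kl} + 1) − 1`, `ν = (I − Pᵀ)⁻¹ λ`. -/
theorem stmt_6 {K : ℕ} (P : Matrix (Fin (K + 1)) (Fin (K + 1)) ℝ)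
    (hP : ∀ k l, 0 ≤ P k l) (hProw : ∀ k, ∑ l, P k l ≤ 1)
    (hspec : ∀ z ∈ spectrum ℂ (P.map Complex.ofReal), ‖z‖ < 1)
    (lam mu : Fin (K + 1) → ℝ) (hlam : ∀ k, 0 < lam k) (hmu : ∀ k, 0 < mu k)
    (ν : Fin (K + 1) → ℝ)
    (hν : ν = ((1 : Matrix (Fin (K + 1)) (Fin (K + 1)) ℝ) - Pᵀ)⁻¹ *ᵥ lam)
    (hνpos : ∀ k, 0 < ν k)
    (θstar : Fin (K + 1) → ℝ) (hθ : ∀ k, θstar k = Real.log (mu k / ν k)) :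
    (∑ k, (Real.exp (θstar k) - 1) * lam k)
      + ∑ k, (Real.exp (-θstar k) * ((∑ l, (Real.exp (θstar l) - 1) * P k l) + 1) - 1) * mu k
      = 0 := by
  classical
  have hνne : ∀ k, (ν k) ≠ 0 := fun k => (hνpos k).ne'
  have hμne : ∀ k, (mu k) ≠ 0 := fun k => (hmu k).ne'
  have hexp : ∀ k, Real.exp (θstar k) = mu k / ν k := fun k => by
    rw [hθ]; exact Real.exp_log (div_pos (hmu k) (hνpos k))
  have hexp' : ∀ k, Real.exp (-(θstar k)) = ν k / mu k := fun k => by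
    rw [Real.exp_neg, hexp, inv_div]
  -- invertibility of 1 - Pᵀ
  have hdet : ((1 : Matrix (Fin (K+1)) (Fin (K+1)) ℝ) - Pᵀ).det ≠ 0 := by
    intro h
    have h1 : ((1 : Matrix (Fin (K+1)) (Fin (K+1)) ℝ) - P).det = 0 := by
      rw [show (1 : Matrix (Fin (K+1)) (Fin (K+1)) ℝ) - Pᵀ = (1 - P)ᵀ by
        simp [Matrix.transpose_sub], Matrix.det_transpose] at h
      exact h
    have h2 : ((1 : Matrix (Fin (K+1)) (Fin (K+1)) ℂ) - P.map Complex.ofReal).det = 0 := by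
      have : ((1 - P).map (Complex.ofRealHom : ℝ →+* ℂ)).det = 0 := by
        rw [← RingHom.mapMatrix_apply, ← RingHom.map_det, h1, map_zero]
      have e : (⇑(Complex.ofRealHom : ℝ →+* ℂ)) = Complex.ofReal := rfl
      rw [e] at this
      simpa [Matrix.map_sub] using this
    have hmem : (1 : ℂ) ∈ spectrum ℂ (P.map Complex.ofReal) := by
      rw [spectrum.mem_iff]
      intro hu
      rw [Matrix.isUnit_iff_isUnit_det] at hu
      simp only [Algebra.algebraMap_eq_smul_one, one_smul] at hu
      rw [h2] at hu
      exact hu.ne_zero rfl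
    have := hspec 1 hmem
    simp at this
  have hAν : ((1 : Matrix (Fin (K+1)) (Fin (K+1)) ℝ) - Pᵀ) *ᵥ ν = lam := by
    rw [hν, Matrix.mulVec_mulVec,
      Matrix.mul_nonsing_inv _ (isUnit_iff_ne_zero.mpr hdet), Matrix.one_mulVec]
  have hkey : ∀ l, ∑ k, P k l * ν k = ν l - lam l := by
    intro l
    have h := congrFun hAν l
    simp [Matrix.mulVec, dotProduct, Matrix.sub_apply, Matrix.one_apply,
      Matrix.transpose_apply, sub_mul, Finset.sum_sub_distrib,
      Finset.sum_ite_eq] at h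
    linarith
  -- rewrite exponentials
  simp only [hexp, hexp']
  -- rewrite second sum termwise
  have hterm : ∀ k, (ν k / mu k * ((∑ l, (mu l / ν l - 1) * P k l) + 1) - 1) * mu k
      = (∑ l, (mu l / ν l - 1) * P k l * ν k) + (ν k - mu k) := by
    intro k
    rw [← Finset.sum_mul, div_mul_eq_mul_div, sub_mul, div_mul_cancel₀ _ (hμne k), one_mul]
    ring
  rw [Finset.sum_congr rfl (fun k _ => hterm k)]
  rw [Finset.sum_add_distrib, Finset.sum_comm]
  have hinner : ∀ l, (∑ k, (mu l / ν l - 1) * P k l * ν k)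
      = (mu l / ν l - 1) * (ν l - lam l) := by
    intro l
    rw [← hkey l, Finset.mul_sum]
    apply Finset.sum_congr rfl
    intro k _
    ring
  rw [Finset.sum_congr rfl (fun l _ => hinner l)]
  rw [← Finset.sum_add_distrib, ← Finset.sum_add_distrib]
  apply Finset.sum_eq_zero
  intro k _
  field_simp [hνne k]
  ring
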